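/- arXiv:1408.7010 — 2 statements merged into one kernel-verified Lean document; each statement's English description precedes it below -/
import Mathlib

section
/- In the counter-example with n = 1, d = 2: there is no symmetric 2×2 matrix M = [[M₁, M₂],[M₂, M₃]] and constant λ ∈ ℝ such that for all x, z > 0 and y with y² < xz, the expression x·(2(M₁²+M₂²) − 2qρ²(M₁+M₂)² + 2M₁ − 2qρν(M₁+M₂) + pr₁ − qν²/2) + y·(4M₂(M₂+M₃) − 4qρ²(M₁+M₂)(M₂+M₃) + 4M₂ − 2qρν(M₂+M₃)) + z·(2(M₂²+M₃²) + 2M₃ + pr₁) + (y²/x)·(−2qρ²(M₂+M₃)²) + pr₀ + ℓ²(M₁+M₃) equals λ, given the parameter constraints p < 0, q = p/(p−1) ∈ (0,1), r₁ > 0, ρ ≠ 0, ν ∈ ℝ, ℓ, r₀ real. -/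
set_option maxHeartbeats 1000000


theorem no_affine_solution (p q ρ ν ℓ r₀ r₁ : ℝ)
    (hp : p < 0) (hq : q = p / (p - 1)) (hr₁ : 0 < r₁) (hρ : ρ ≠ 0) :
    ¬ ∃ (M₁ M₂ M₃ lam : ℝ), ∀ x y z : ℝ, 0 < x → 0 < z → y ^ 2 < x * z →
      x * (2 * (M₁ ^ 2 + M₂ ^ 2) - 2 * q * ρ ^ 2 * (M₁ + M₂) ^ 2 + 2 * M₁
            - 2 * q * ρ * ν * (M₁ + M₂) + p * r₁ - q * ν ^ 2 / 2)
        + y * (4 * M₂ * (M₂ + M₃) - 4 * q * ρ ^ 2 * (M₁ + M₂) * (M₂ + M₃)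
            + 4 * M₂ - 2 * q * ρ * ν * (M₂ + M₃))
        + z * (2 * (M₂ ^ 2 + M₃ ^ 2) + 2 * M₃ + p * r₁)
        + (y ^ 2 / x) * (-2 * q * ρ ^ 2 * (M₂ + M₃) ^ 2)
        + p * r₀ + ℓ ^ 2 * (M₁ + M₃) = lam := by
  rintro ⟨M₁, M₂, M₃, lam, h⟩
  have hq0 : 0 < q := by
    rw [hq]; exact div_pos_of_neg_of_neg hp (by linarith)
  have h1 := h 1 0 1 (by norm_num) (by norm_num) (by norm_num)
  have h2 := h 1 0 2 (by norm_num) (by norm_num) (by norm_num)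
  have h3 := h 1 (1/2) 1 (by norm_num) (by norm_num) (by norm_num)
  have h4 := h 1 (-(1/2)) 1 (by norm_num) (by norm_num) (by norm_num)
  norm_num at h1 h2 h3 h4
  -- C = 0
  have hC : 2 * (M₂ ^ 2 + M₃ ^ 2) + 2 * M₃ + p * r₁ = 0 := by linarith
  -- B = 0
  have hB : 4 * M₂ * (M₂ + M₃) - 4 * q * ρ ^ 2 * (M₁ + M₂) * (M₂ + M₃)
      + 4 * M₂ - 2 * q * ρ * ν * (M₂ + M₃) = 0 := by linarith
  -- D = 0
  have hD : q * ρ ^ 2 * (M₂ + M₃) ^ 2 = 0 := by linarith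
  have h23 : M₂ + M₃ = 0 := by
    have hρ2 : 0 < ρ ^ 2 := by positivity
    have := mul_pos hq0 hρ2
    have hsq : (M₂ + M₃) ^ 2 = 0 := by
      rcases mul_eq_zero.mp (by linarith [hD] : (q * ρ ^ 2) * (M₂ + M₃) ^ 2 = 0) with h | h
      · linarith
      · exact h
    exact pow_eq_zero_iff (n := 2) (by norm_num) |>.mp hsq
  have hM2 : M₂ = 0 := by
    rw [h23] at hB; ring_nf at hB; linarith
  have hM3 : M₃ = 0 := by linarith
  rw [hM2, hM3] at hC
  nlinarith [mul_neg_of_neg_of_pos hp hr₁]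
end

section
/- Let ρ ∈ ℝ^d, C ∈ M^{m×d} with (ρᵀρ)CCᵀ ≤ I_m, and set D := sqrt(I_m − (ρᵀρ)CCᵀ). Let σ ∈ M^{n×m}, ν ∈ ℝ^n, Θ ∈ S^m with Θ² = Θ, σΘ = σ, and let η ∈ M^d. Then the following identity holds: ‖−Cᵀσᵀν ρᵀ + η − CᵀΘCηρ ρᵀ‖² + |Dᵀσᵀν + DᵀΘCηρ|² = νᵀσσᵀν + Tr(ηᵀη) − ρᵀηᵀCᵀΘCηρ, where ‖·‖ is the Frobenius norm on M^d and |·| the Euclidean norm on ℝ^m. (Here the first squared norm is Σ_{k,l}(−(Cᵀσᵀν)_k ρ_l + η_{kl} − (CᵀΘCηρ)_k ρ_l)².) -/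
open Matrix

section helpers
variable {k l : Type*} [Fintype k] [Fintype l]

private lemma helper_mv_dot (A : Matrix k l ℝ) (u : l → ℝ) (v : k → ℝ) :
    (A *ᵥ u) ⬝ᵥ v = u ⬝ᵥ (Aᵀ *ᵥ v) := by
  simp only [dotProduct, mulVec, dotProduct, transpose_apply, Finset.sum_mul, Finset.mul_sum]
  rw [Finset.sum_comm]
  exact Finset.sum_congr rfl fun j _ => Finset.sum_congr rfl fun i _ => by ring

private lemma helper_tr_vmv (x y : k → ℝ) (A : Matrix k k ℝ) :
    Matrix.trace ((Matrix.vecMulVec x y)ᵀ * A) = x ⬝ᵥ (A *ᵥ y) := by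
  simp only [Matrix.trace, Matrix.diag, mul_apply, transpose_apply, vecMulVec_apply,
    dotProduct, mulVec, dotProduct, Finset.mul_sum]
  rw [Finset.sum_comm]
  exact Finset.sum_congr rfl fun j _ => Finset.sum_congr rfl fun i _ => by ring

private lemma helper_vmv_mv (x y z : k → ℝ) :
    Matrix.vecMulVec x y *ᵥ z = (y ⬝ᵥ z) • x := by
  ext i
  simp only [mulVec, dotProduct, vecMulVec_apply, Pi.smul_apply, smul_eq_mul, Finset.sum_mul]
  exact Finset.sum_congr rfl fun j _ => by ring
private lemma helper_dot_mv (A : Matrix k l ℝ) (u : k → ℝ) (v : l → ℝ) :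
    u ⬝ᵥ (A *ᵥ v) = (Aᵀ *ᵥ u) ⬝ᵥ v := by
  rw [helper_mv_dot, transpose_transpose, dotProduct_comm]
end helpers

section
open scoped ComplexOrder

/-- The square root of a positive semidefinite matrix, as `Matrix.PosSemidef.sqrt` was defined
in the older Mathlib (removed since in favour of `CFC.sqrt`). -/
noncomputable def Matrix.PosSemidef.sqrt {n 𝕜 : Type*} [Fintype n] [DecidableEq n] [RCLike 𝕜]
    {A : Matrix n n 𝕜} (hA : A.PosSemidef) : Matrix n n 𝕜 :=
  hA.1.eigenvectorUnitary.1 * diagonal ((↑) ∘ Real.sqrt ∘ hA.1.eigenvalues) *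
  (star hA.1.eigenvectorUnitary : Matrix n n 𝕜)

end

theorem risk_premia_identity {d m n : ℕ}
    (ρ : Fin d → ℝ) (C : Matrix (Fin m) (Fin d) ℝ)
    (hD : ((1 : Matrix (Fin m) (Fin m) ℝ) - (ρ ⬝ᵥ ρ) • (C * Cᵀ)).PosSemidef)
    (σ : Matrix (Fin n) (Fin m) ℝ) (ν : Fin n → ℝ)
    (Θ : Matrix (Fin m) (Fin m) ℝ) (hΘsymm : Θᵀ = Θ)
    (hΘ2 : Θ * Θ = Θ) (hσΘ : σ * Θ = σ)
    (η : Matrix (Fin d) (Fin d) ℝ) :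
    let D := hD.sqrt
    let T := -Matrix.vecMulVec ((Cᵀ * σᵀ) *ᵥ ν) ρ + η
      - Matrix.vecMulVec ((Cᵀ * Θ * C * η) *ᵥ ρ) ρ
    let w := (Dᵀ * σᵀ) *ᵥ ν + (Dᵀ * Θ * C * η) *ᵥ ρ
    Matrix.trace (Tᵀ * T) + w ⬝ᵥ w =
      ν ⬝ᵥ (σ * σᵀ) *ᵥ ν + Matrix.trace (ηᵀ * η)
        - ρ ⬝ᵥ (ηᵀ * Cᵀ * Θ * C * η) *ᵥ ρ := by
  intro D T w
  have hDsymm : Dᵀ = D := by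
    simp only [D, Matrix.PosSemidef.sqrt, transpose_mul, diagonal_transpose,
      star_eq_conjTranspose, conjTranspose_eq_transpose_of_trivial, transpose_transpose,
      Matrix.mul_assoc]
  have hDD : D * D = (1 : Matrix (Fin m) (Fin m) ℝ) - (ρ ⬝ᵥ ρ) • (C * Cᵀ) :=
    by
    have hU : (star hD.1.eigenvectorUnitary : Matrix (Fin m) (Fin m) ℝ) * hD.1.eigenvectorUnitary.1 = 1 :=
      Unitary.star_mul_self_of_mem hD.1.eigenvectorUnitary.2
    have hdd : diagonal (RCLike.ofReal ∘ Real.sqrt ∘ hD.1.eigenvalues : Fin m → ℝ) *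
        diagonal (RCLike.ofReal ∘ Real.sqrt ∘ hD.1.eigenvalues : Fin m → ℝ)
        = diagonal (RCLike.ofReal ∘ hD.1.eigenvalues : Fin m → ℝ) := by
      rw [diagonal_mul_diagonal]; congr 1; funext i
      simp [Real.mul_self_sqrt (hD.eigenvalues_nonneg i)]
    conv_rhs => rw [hD.1.spectral_theorem, Unitary.conjStarAlgAut_apply]
    simp only [D, Matrix.PosSemidef.sqrt, Matrix.mul_assoc]
    rw [← Matrix.mul_assoc (star hD.1.eigenvectorUnitary : Matrix (Fin m) (Fin m) ℝ), hU,
      Matrix.one_mul, ← Matrix.mul_assoc (diagonal _), hdd]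
  set a : Fin d → ℝ := (Cᵀ * σᵀ) *ᵥ ν with ha
  set b : Fin d → ℝ := (Cᵀ * Θ * C * η) *ᵥ ρ with hb
  set s : Fin m → ℝ := σᵀ *ᵥ ν with hs
  set t : Fin m → ℝ := (Θ * C * η) *ᵥ ρ with ht
  set q : Fin m → ℝ := (C * η) *ᵥ ρ with hq
  have hcs : Cᵀ *ᵥ s = a := by rw [hs, ha, mulVec_mulVec]
  have hct : Cᵀ *ᵥ t = b := by
    rw [ht, hb, mulVec_mulVec]; simp only [Matrix.mul_assoc]
  have h1 : Cᵀ *ᵥ (s + t) = a + b := by rw [mulVec_add, hcs, hct]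
  have hΘq : Θ *ᵥ q = t := by rw [hq, ht, mulVec_mulVec, Matrix.mul_assoc]
  have hΘs : Θ *ᵥ s = s := by
    rw [hs, mulVec_mulVec, ← hΘsymm, ← Matrix.transpose_mul, hσΘ]
  have hΘt : Θ *ᵥ t = t := by rw [← hΘq, mulVec_mulVec, hΘ2, hΘq]
  have hT : T = η - Matrix.vecMulVec (a + b) ρ := by
    show -Matrix.vecMulVec a ρ + η - Matrix.vecMulVec b ρ = _
    ext i j
    simp [vecMulVec_apply]
    ring
  -- trace part
  have htrace : Matrix.trace (Tᵀ * T)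
      = Matrix.trace (ηᵀ * η) - 2 * ((a + b) ⬝ᵥ (η *ᵥ ρ))
        + ((a + b) ⬝ᵥ (a + b)) * (ρ ⬝ᵥ ρ) := by
    rw [hT, Matrix.transpose_sub, Matrix.sub_mul, Matrix.mul_sub, Matrix.mul_sub,
      Matrix.trace_sub, Matrix.trace_sub, Matrix.trace_sub,
      helper_tr_vmv, helper_tr_vmv, helper_vmv_mv]
    have h2 : Matrix.trace (ηᵀ * Matrix.vecMulVec (a + b) ρ)
        = (a + b) ⬝ᵥ (η *ᵥ ρ) := by
      rw [← Matrix.trace_transpose (ηᵀ * Matrix.vecMulVec (a + b) ρ),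
        Matrix.transpose_mul, Matrix.transpose_transpose, helper_tr_vmv]
    rw [h2, dotProduct_smul, smul_eq_mul]
    ring
  -- w part
  have hwu : w = D *ᵥ (s + t) := by
    show (Dᵀ * σᵀ) *ᵥ ν + (Dᵀ * Θ * C * η) *ᵥ ρ = _
    rw [mulVec_add, hs, ht, mulVec_mulVec, mulVec_mulVec, hDsymm]
    simp only [Matrix.mul_assoc]
  have hwdot : w ⬝ᵥ w = (s + t) ⬝ᵥ (s + t)
      - (ρ ⬝ᵥ ρ) * ((a + b) ⬝ᵥ (a + b)) := by
    rw [hwu, helper_mv_dot, hDsymm, mulVec_mulVec, hDD, sub_mulVec, one_mulVec,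
      dotProduct_sub, smul_mulVec, dotProduct_smul, smul_eq_mul]
    congr 2
    rw [← mulVec_mulVec, dotProduct_comm, helper_mv_dot, h1]
  -- dot product facts
  have f1 : s ⬝ᵥ s = ν ⬝ᵥ (σ * σᵀ) *ᵥ ν := by
    conv_lhs => rw [hs, helper_mv_dot, transpose_transpose, mulVec_mulVec]
  have f2 : s ⬝ᵥ t = s ⬝ᵥ q := by
    conv_lhs => rw [← hΘq, helper_dot_mv, hΘsymm, hΘs]
  have f3 : t ⬝ᵥ t = t ⬝ᵥ q := by
    conv_lhs => rw [← hΘq, helper_mv_dot, hΘsymm, mulVec_mulVec, hΘ2, hΘq]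
    exact dotProduct_comm q t
  have f4 : (a + b) ⬝ᵥ (η *ᵥ ρ) = s ⬝ᵥ q + t ⬝ᵥ q := by
    rw [← h1, helper_mv_dot, transpose_transpose, mulVec_mulVec, ← hq, add_dotProduct]
  have f5 : t ⬝ᵥ q = ρ ⬝ᵥ (ηᵀ * Cᵀ * Θ * C * η) *ᵥ ρ := by
    rw [ht, helper_mv_dot, Matrix.transpose_mul, Matrix.transpose_mul, hΘsymm, hq,
      mulVec_mulVec]
    simp only [Matrix.mul_assoc]
  have f6 : t ⬝ᵥ s = s ⬝ᵥ t := dotProduct_comm t s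
  rw [htrace, hwdot]
  simp only [dotProduct_add, add_dotProduct] at *
  linarith [f1, f2, f3, f4, f5, f6]
end
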